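/- If w : (0,T] → ℝ is continuously differentiable with ‖w'(t)‖ ≤ C t^{2α−2} for all t ∈ (0,T] where α ∈ (0,1/2] and C > 0, then for any ε ∈ (0, 2α) the Sobolev–Slobodeckij seminorm ∫₀ᵀ∫₀ᵀ |w(t) − w(s)|/|t−s|^{2α+1−ε} dt ds is finite. -/

import Mathlib

open MeasureTheory Set
open scoped ENNReal

lemma aux_min_le_rpow {x y θ : ℝ} (hx : 0 ≤ x) (hy : 0 ≤ y) (hθ0 : 0 < θ) (hθ1 : θ < 1) :
    min x y ≤ x ^ (1 - θ) * y ^ θ := by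
  rcases eq_or_lt_of_le hx with hx0 | hx0
  · rw [← hx0, Real.zero_rpow (by linarith : (1:ℝ) - θ ≠ 0), zero_mul]
    exact min_le_left 0 y
  rcases eq_or_lt_of_le hy with hy0 | hy0
  · rw [← hy0, Real.zero_rpow (ne_of_gt hθ0), mul_zero]
    exact le_of_eq (min_eq_right (hy0 ▸ hx))
  have hm : 0 < min x y := lt_min hx0 hy0
  calc min x y = min x y ^ (1 - θ) * min x y ^ θ := by
        rw [← Real.rpow_add hm, sub_add_cancel, Real.rpow_one]
  _ ≤ x ^ (1 - θ) * y ^ θ :=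
      mul_le_mul (Real.rpow_le_rpow hm.le (min_le_left _ _) (by linarith))
        (Real.rpow_le_rpow hm.le (min_le_right _ _) hθ0.le)
        (Real.rpow_nonneg hm.le _) (Real.rpow_nonneg hx _)

lemma aux_lint_rpow {c T : ℝ} (hc : -1 < c) (hT : 0 < T) :
    ∫⁻ t in Ioo (0:ℝ) T, ENNReal.ofReal (t ^ c) < ⊤ := by
  have h2 : IntegrableOn (fun t : ℝ => t ^ c) (Ioc 0 T) volume :=
    (intervalIntegrable_iff_integrableOn_Ioc_of_le hT.le).mp
      (intervalIntegral.intervalIntegrable_rpow' hc)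
  exact (h2.mono_set Ioo_subset_Ioc_self).setLIntegral_lt_top

lemma aux_J_lt_top {b T : ℝ} (hb : b < 1) (hT : 0 < T) :
    ∫⁻ u in Ioo (-T) T, ENNReal.ofReal (|u| ^ (-b)) < ⊤ := by
  have hpos : IntegrableOn (fun u : ℝ => |u| ^ (-b)) (Ioc 0 T) volume := by
    have base : IntegrableOn (fun u : ℝ => u ^ (-b)) (Ioc 0 T) volume :=
      (intervalIntegrable_iff_integrableOn_Ioc_of_le hT.le).mp
        (intervalIntegral.intervalIntegrable_rpow' (by linarith : (-1:ℝ) < -b))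
    exact base.congr_fun (fun u hu => by simp [abs_of_pos hu.1]) measurableSet_Ioc
  have h1 : IntervalIntegrable (fun u : ℝ => |u| ^ (-b)) volume 0 T :=
    (intervalIntegrable_iff_integrableOn_Ioc_of_le hT.le).mpr hpos
  have h2 : IntervalIntegrable (fun u : ℝ => |u| ^ (-b)) volume (-T) 0 := by
    have := ((IntervalIntegrable.iff_comp_neg (f := fun u : ℝ => |u| ^ (-b)) (a := 0) (b := T) (by simp)).mp h1)
    simp only [abs_neg, neg_zero] at this
    exact this.symm
  have h3 : IntegrableOn (fun u : ℝ => |u| ^ (-b)) (Ioc (-T) 0 ∪ Ioc 0 T) volume := by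
    refine IntegrableOn.union ?_ ?_
    · exact (intervalIntegrable_iff_integrableOn_Ioc_of_le (by linarith)).mp h2
    · exact (intervalIntegrable_iff_integrableOn_Ioc_of_le hT.le).mp h1
  have h4 : Ioo (-T) T ⊆ Ioc (-T) 0 ∪ Ioc 0 T := by
    intro u hu
    rcases le_or_gt u 0 with h | h
    · exact Or.inl ⟨hu.1, h⟩
    · exact Or.inr ⟨h, hu.2.le⟩
  exact (h3.mono_set h4).setLIntegral_lt_top

lemma aux_shift {T : ℝ} (g : ℝ → ℝ≥0∞) {s : ℝ} (hs : s ∈ Ioo (0:ℝ) T) :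
    ∫⁻ t in Ioo (0:ℝ) T, g (t - s) ≤ ∫⁻ u in Ioo (-T) T, g u := by
  rw [← lintegral_indicator measurableSet_Ioo, ← lintegral_indicator measurableSet_Ioo]
  calc ∫⁻ t, (Ioo (0:ℝ) T).indicator (fun t => g (t - s)) t
      ≤ ∫⁻ t, (Ioo (-T) T).indicator g (t - s) := by
        refine lintegral_mono fun t => ?_
        by_cases ht : t ∈ Ioo (0:ℝ) T
        · rw [indicator_of_mem ht, indicator_of_mem
            (show t - s ∈ Ioo (-T) T from ⟨by cases hs; cases ht; linarith,
              by cases hs; cases ht; linarith⟩)]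
        · rw [indicator_of_notMem ht]; exact zero_le
    _ = ∫⁻ t, (Ioo (-T) T).indicator g (t + (-s)) := by simp_rw [sub_eq_add_neg]
    _ = ∫⁻ u, (Ioo (-T) T).indicator g u := lintegral_add_right_eq_self _ (-s)

lemma aux_key {K a b T : ℝ} (hK : 0 ≤ K) (ha0 : 0 ≤ a) (ha : a < 1) (hb : b < 1) (hT : 0 < T) :
    ∫⁻ s in Ioo (0:ℝ) T, ∫⁻ t in Ioo (0:ℝ) T,
      ENNReal.ofReal (K * s ^ (-a) * |t - s| ^ (-b)) < ⊤ := by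
  set J := ∫⁻ u in Ioo (-T) T, ENNReal.ofReal (|u| ^ (-b)) with hJdef
  have hJtop : J < ⊤ := aux_J_lt_top hb hT
  have hmono : ∫⁻ s in Ioo (0:ℝ) T, ∫⁻ t in Ioo (0:ℝ) T,
      ENNReal.ofReal (K * s ^ (-a) * |t - s| ^ (-b)) ≤
      ∫⁻ s in Ioo (0:ℝ) T, ENNReal.ofReal (K * s ^ (-a)) * J := by
    refine setLIntegral_mono' measurableSet_Ioo fun s hs => ?_
    have heq : ∀ t : ℝ, ENNReal.ofReal (K * s ^ (-a) * |t - s| ^ (-b)) =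
        ENNReal.ofReal (K * s ^ (-a)) * ENNReal.ofReal (|t - s| ^ (-b)) := fun t =>
      ENNReal.ofReal_mul (mul_nonneg hK (Real.rpow_nonneg hs.1.le _))
    simp_rw [heq]
    rw [lintegral_const_mul' _ _ ENNReal.ofReal_ne_top]
    exact mul_le_mul_right (aux_shift (fun u => ENNReal.ofReal (|u| ^ (-b))) hs) _
  refine lt_of_le_of_lt hmono ?_
  rw [lintegral_mul_const' _ _ hJtop.ne]
  refine ENNReal.mul_lt_top ?_ hJtop
  have heq2 : ∀ s : ℝ, 0 ≤ s → ENNReal.ofReal (K * s ^ (-a)) =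
      ENNReal.ofReal K * ENNReal.ofReal (s ^ (-a)) := fun s hs => ENNReal.ofReal_mul hK
  calc ∫⁻ s in Ioo (0:ℝ) T, ENNReal.ofReal (K * s ^ (-a))
      = ∫⁻ s in Ioo (0:ℝ) T, ENNReal.ofReal K * ENNReal.ofReal (s ^ (-a)) := by
        refine setLIntegral_congr_fun measurableSet_Ioo (fun s hs => heq2 s hs.1.le)
    _ = ENNReal.ofReal K * ∫⁻ s in Ioo (0:ℝ) T, ENNReal.ofReal (s ^ (-a)) :=
        lintegral_const_mul' _ _ ENNReal.ofReal_ne_top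
    _ < ⊤ := ENNReal.mul_lt_top ENNReal.ofReal_lt_top (aux_lint_rpow (by linarith) hT)
theorem stmt_6 (α ε T C : ℝ) (hα : α ∈ Set.Ioc (0:ℝ) (1/2)) (hT : 0 < T) (hC : 0 < C)
    (hε : ε ∈ Set.Ioo (0:ℝ) (2 * α)) (w : ℝ → ℝ)
    (hw_cont : ContinuousOn w (Set.Icc 0 T))
    (hw_diff : ∀ t ∈ Set.Ioc (0:ℝ) T, DifferentiableAt ℝ w t)
    (hw'_cont : ContinuousOn (deriv w) (Set.Ioc 0 T))
    (hw'_bd : ∀ t ∈ Set.Ioc (0:ℝ) T, |deriv w t| ≤ C * t ^ (2 * α - 2)) :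
    ∫⁻ s in Set.Ioo (0:ℝ) T, ∫⁻ t in Set.Ioo (0:ℝ) T,
        ENNReal.ofReal (|w t - w s| / |t - s| ^ (2 * α + 1 - ε)) < ⊤ := by
  obtain ⟨M, hM⟩ := isCompact_Icc.exists_bound_of_continuousOn hw_cont
  have hM0 : 0 ≤ M := le_trans (norm_nonneg _) (hM 0 ⟨le_rfl, hT.le⟩)
  have hα1 := hα.1; have hα2 := hα.2
  have hε1 := hε.1; have hε2 := hε.2
  set θ : ℝ := 2*α - ε/2 with hθdef
  set a : ℝ := (2 - 2*α) * θ with hadef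
  set b : ℝ := 1 - ε/2 with hbdef
  set K : ℝ := (2*M) ^ (1 - θ) * C ^ θ with hKdef
  have hθ0 : 0 < θ := by rw [hθdef]; linarith
  have hθ1 : θ < 1 := by rw [hθdef]; linarith
  have ha0 : 0 ≤ a := by rw [hadef]; exact mul_nonneg (by linarith) hθ0.le
  have ha1 : a < 1 := by
    rw [hadef, hθdef]
    nlinarith [sq_nonneg (2*α - 1)]
  have hb1 : b < 1 := by rw [hbdef]; linarith
  have hK0 : 0 ≤ K :=
    mul_nonneg (Real.rpow_nonneg (by linarith) _) (Real.rpow_nonneg hC.le _)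
  -- FTC-based difference bound
  have hdiff : ∀ s t : ℝ, 0 < s → s < t → t ≤ T →
      |w t - w s| ≤ C * s ^ (2*α-2) * (t - s) := by
    intro s t hs hst htT
    have hsub : Set.Icc s t ⊆ Set.Ioc 0 T := fun u hu => ⟨lt_of_lt_of_le hs hu.1, hu.2.trans htT⟩
    have hder : ∀ u ∈ Set.uIcc s t, HasDerivAt w (deriv w u) u := by
      intro u hu
      rw [Set.uIcc_of_le hst.le] at hu
      exact (hw_diff u (hsub hu)).hasDerivAt
    have hint : IntervalIntegrable (deriv w) volume s t := by
      apply ContinuousOn.intervalIntegrable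
      rw [Set.uIcc_of_le hst.le]
      exact hw'_cont.mono hsub
    have heq := intervalIntegral.integral_eq_sub_of_hasDerivAt hder hint
    have hbd : ∀ u ∈ Set.uIoc s t, ‖deriv w u‖ ≤ C * s ^ (2*α-2) := by
      intro u hu
      rw [Set.uIoc_of_le hst.le] at hu
      have hu' : u ∈ Set.Ioc 0 T := ⟨hs.trans hu.1, hu.2.trans htT⟩
      rw [Real.norm_eq_abs]
      refine (hw'_bd u hu').trans ?_
      exact mul_le_mul_of_nonneg_left
        (Real.rpow_le_rpow_of_nonpos hs hu.1.le (by linarith)) hC.le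
    calc |w t - w s| = ‖∫ u in s..t, deriv w u‖ := by rw [heq, Real.norm_eq_abs]
      _ ≤ C * s ^ (2*α-2) * |t - s| := intervalIntegral.norm_integral_le_of_norm_le_const hbd
      _ = C * s ^ (2*α-2) * (t - s) := by rw [abs_of_pos (by linarith)]
  -- pointwise bound
  have hpt : ∀ s ∈ Set.Ioo (0:ℝ) T, ∀ t ∈ Set.Ioo (0:ℝ) T,
      ENNReal.ofReal (|w t - w s| / |t - s| ^ (2*α+1-ε)) ≤
      ENNReal.ofReal (K * s ^ (-a) * |t - s| ^ (-b)) +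
        ENNReal.ofReal (K * t ^ (-a) * |t - s| ^ (-b)) := by
    intro s hs t ht
    by_cases hts : t = s
    · subst hts; simp
    have hr : 0 < |t - s| := abs_pos.mpr (sub_ne_zero.mpr hts)
    have hm0 : 0 < min s t := lt_min hs.1 ht.1
    have h1 : |w t - w s| ≤ 2*M := by
      have h1a := hM t ⟨ht.1.le, ht.2.le⟩
      have h1b := hM s ⟨hs.1.le, hs.2.le⟩
      rw [Real.norm_eq_abs] at h1a h1b
      calc |w t - w s| ≤ |w t| + |w s| := by
            have := norm_sub_le (w t) (w s)
            simpa [Real.norm_eq_abs] using this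
        _ ≤ 2*M := by linarith
    have h2 : |w t - w s| ≤ C * (min s t) ^ (2*α-2) * |t - s| := by
      rcases (Ne.lt_or_gt hts) with h | h
      · -- t < s
        have hd := hdiff t s ht.1 h hs.2.le
        have hmin : min s t = t := min_eq_right h.le
        calc |w t - w s| = |w s - w t| := abs_sub_comm _ _
          _ ≤ C * t ^ (2*α-2) * (s - t) := hd
          _ = C * (min s t) ^ (2*α-2) * |t - s| := by
              rw [hmin, abs_sub_comm, abs_of_pos (by linarith)]
      · -- s < t
        have hd := hdiff s t hs.1 h ht.2.le
        have hmin : min s t = s := min_eq_left h.le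
        calc |w t - w s| ≤ C * s ^ (2*α-2) * (t - s) := hd
          _ = C * (min s t) ^ (2*α-2) * |t - s| := by
              rw [hmin, abs_of_pos (by linarith)]
    have h3 : |w t - w s| ≤ K * (min s t) ^ (-a) * |t - s| ^ θ := by
      have hinterp := aux_min_le_rpow (x := 2*M)
        (y := C * (min s t) ^ (2*α-2) * |t - s|) (by linarith)
        (mul_nonneg (mul_nonneg hC.le (Real.rpow_nonneg hm0.le _)) hr.le) hθ0 hθ1
      have hexp : (C * (min s t) ^ (2*α-2) * |t - s|) ^ θ =
          C ^ θ * (min s t) ^ ((2*α-2)*θ) * |t - s| ^ θ := by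
        rw [Real.mul_rpow (mul_nonneg hC.le (Real.rpow_nonneg hm0.le _)) hr.le,
          Real.mul_rpow hC.le (Real.rpow_nonneg hm0.le _), ← Real.rpow_mul hm0.le]
      have hnegexp : (2*α-2)*θ = -a := by rw [hadef]; ring
      calc |w t - w s| ≤ min (2*M) (C * (min s t) ^ (2*α-2) * |t - s|) := le_min h1 h2
        _ ≤ (2*M) ^ (1-θ) * (C * (min s t) ^ (2*α-2) * |t - s|) ^ θ := hinterp
        _ = K * (min s t) ^ (-a) * |t - s| ^ θ := by
            rw [hexp, hnegexp, hKdef]; ring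
    have h4 : |w t - w s| / |t - s| ^ (2*α+1-ε) ≤ K * (min s t) ^ (-a) * |t - s| ^ (-b) := by
      have hrp : 0 < |t - s| ^ (2*α+1-ε) := Real.rpow_pos_of_pos hr _
      rw [div_le_iff₀ hrp]
      calc |w t - w s| ≤ K * (min s t) ^ (-a) * |t - s| ^ θ := h3
        _ = K * (min s t) ^ (-a) * |t - s| ^ (-b) * |t - s| ^ (2*α+1-ε) := by
            rw [mul_assoc (K * (min s t) ^ (-a)), ← Real.rpow_add hr]
            congr 2
            rw [hbdef, hθdef]; ring
    have h5 : (min s t) ^ (-a) ≤ s ^ (-a) + t ^ (-a) := by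
      rcases le_total s t with h | h
      · rw [min_eq_left h]
        exact le_add_of_nonneg_right (Real.rpow_nonneg ht.1.le _)
      · rw [min_eq_right h]
        exact le_add_of_nonneg_left (Real.rpow_nonneg hs.1.le _)
    have h6 : |w t - w s| / |t - s| ^ (2*α+1-ε) ≤
        K * s ^ (-a) * |t - s| ^ (-b) + K * t ^ (-a) * |t - s| ^ (-b) := by
      refine h4.trans ?_
      have hrb : 0 ≤ |t - s| ^ (-b) := Real.rpow_nonneg hr.le _
      calc K * (min s t) ^ (-a) * |t - s| ^ (-b)
          ≤ K * (s ^ (-a) + t ^ (-a)) * |t - s| ^ (-b) :=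
            mul_le_mul_of_nonneg_right (mul_le_mul_of_nonneg_left h5 hK0) hrb
        _ = K * s ^ (-a) * |t - s| ^ (-b) + K * t ^ (-a) * |t - s| ^ (-b) := by ring
    calc ENNReal.ofReal (|w t - w s| / |t - s| ^ (2*α+1-ε))
        ≤ ENNReal.ofReal (K * s ^ (-a) * |t - s| ^ (-b) + K * t ^ (-a) * |t - s| ^ (-b)) :=
          ENNReal.ofReal_le_ofReal h6
      _ ≤ _ := ENNReal.ofReal_add_le
  -- measurability
  have hmeas1 : Measurable (fun p : ℝ × ℝ =>
      ENNReal.ofReal (K * p.1 ^ (-a) * |p.2 - p.1| ^ (-b))) :=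
    Measurable.ennreal_ofReal (((measurable_const.mul (measurable_fst.pow_const _)).mul
      (((measurable_snd.sub measurable_fst).abs).pow_const _)))
  have hmeas2 : Measurable (fun p : ℝ × ℝ =>
      ENNReal.ofReal (K * p.2 ^ (-a) * |p.2 - p.1| ^ (-b))) :=
    Measurable.ennreal_ofReal (((measurable_const.mul (measurable_snd.pow_const _)).mul
      (((measurable_snd.sub measurable_fst).abs).pow_const _)))
  set μ := volume.restrict (Set.Ioo (0:ℝ) T) with hμdef
  have hkey1 : ∫⁻ s in Set.Ioo (0:ℝ) T, ∫⁻ t in Set.Ioo (0:ℝ) T,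
      ENNReal.ofReal (K * s ^ (-a) * |t - s| ^ (-b)) < ⊤ :=
    aux_key hK0 ha0 ha1 hb1 hT
  have hkey2 : ∫⁻ s in Set.Ioo (0:ℝ) T, ∫⁻ t in Set.Ioo (0:ℝ) T,
      ENNReal.ofReal (K * t ^ (-a) * |t - s| ^ (-b)) < ⊤ := by
    have hswap := lintegral_lintegral_swap (μ := μ) (ν := μ)
      (f := fun s t => ENNReal.ofReal (K * t ^ (-a) * |t - s| ^ (-b)))
      hmeas2.aemeasurable
    rw [hμdef] at hswap
    rw [hswap]
    have : ∀ t : ℝ, ∫⁻ s in Set.Ioo (0:ℝ) T, ENNReal.ofReal (K * t ^ (-a) * |t - s| ^ (-b)) =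
        ∫⁻ s in Set.Ioo (0:ℝ) T, ENNReal.ofReal (K * t ^ (-a) * |s - t| ^ (-b)) := fun t =>
      lintegral_congr fun s => by rw [abs_sub_comm]
    simp_rw [this]
    exact aux_key hK0 ha0 ha1 hb1 hT
  calc ∫⁻ s in Set.Ioo (0:ℝ) T, ∫⁻ t in Set.Ioo (0:ℝ) T,
        ENNReal.ofReal (|w t - w s| / |t - s| ^ (2 * α + 1 - ε))
      ≤ ∫⁻ s in Set.Ioo (0:ℝ) T, ∫⁻ t in Set.Ioo (0:ℝ) T,
        (ENNReal.ofReal (K * s ^ (-a) * |t - s| ^ (-b)) +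
          ENNReal.ofReal (K * t ^ (-a) * |t - s| ^ (-b))) :=
        setLIntegral_mono' measurableSet_Ioo fun s hs =>
          setLIntegral_mono' measurableSet_Ioo fun t ht => hpt s hs t ht
    _ = ∫⁻ s in Set.Ioo (0:ℝ) T, ((∫⁻ t in Set.Ioo (0:ℝ) T,
          ENNReal.ofReal (K * s ^ (-a) * |t - s| ^ (-b))) +
        ∫⁻ t in Set.Ioo (0:ℝ) T, ENNReal.ofReal (K * t ^ (-a) * |t - s| ^ (-b))) := by
        refine lintegral_congr fun s => ?_
        exact lintegral_add_left (by
          exact Measurable.ennreal_ofReal ((measurable_const.mul measurable_const).mul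
            (((measurable_id.sub measurable_const).abs).pow_const _))) _
    _ = (∫⁻ s in Set.Ioo (0:ℝ) T, ∫⁻ t in Set.Ioo (0:ℝ) T,
          ENNReal.ofReal (K * s ^ (-a) * |t - s| ^ (-b))) +
        ∫⁻ s in Set.Ioo (0:ℝ) T, ∫⁻ t in Set.Ioo (0:ℝ) T,
          ENNReal.ofReal (K * t ^ (-a) * |t - s| ^ (-b)) := by
        refine lintegral_add_left ?_ _
        exact hmeas1.lintegral_prod_right'
    _ < ⊤ := ENNReal.add_lt_top.mpr ⟨hkey1, hkey2⟩
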